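/- With κ₁, κ₂, κ₃ > 0 and M ∈ ℕ, define u₁(z₂) = (κ₁z₂+κ₂)/(κ₁z₂+κ₂+κ₃) and u₂(z₂) = κ₃/(κ₁z₂+κ₂+κ₃). Then u₁(z₂) + u₂(z₂) = 1, and the vector-valued function h₁(z₁,z₂) = (z₁ u₁(z₂), z₁ u₂(z₂)) satisfies, for the operator L₁ acting as L₁h(z₁,z₂) = κ₁z₁z₂(h(z₁-1,z₂) - h(z₁,z₂)) + (κ₂+κ₃)(M-z₁)(h(z₁+1,z₂) - h(z₁,z₂)), the identity L₁h₁(z₁,z₂) = (κ₂(M-z₁) - κ₁z₁z₂ + Mκ₁κ₃z₂/(κ₂+κ₃+κ₁z₂), κ₃(M-z₁) - Mκ₁κ₃z₂/(κ₂+κ₃+κ₁z₂)). -/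
import Mathlib


/-- The explicit solution of the Poisson equation `L₁h₁ = F - F̄` in the Michaelis–Menten
model: with `u₁(z₂) = (κ₁z₂+κ₂)/(κ₁z₂+κ₂+κ₃)` and `u₂(z₂) = κ₃/(κ₁z₂+κ₂+κ₃)`,
we have `u₁ + u₂ = 1` and `h₁(z₁,z₂) = (z₁u₁(z₂), z₁u₂(z₂))` satisfies the stated identity
for the birth-death generator `L₁`. -/
theorem stmt_5 (κ₁ κ₂ κ₃ : ℝ) (hκ₁ : 0 < κ₁) (hκ₂ : 0 < κ₂) (hκ₃ : 0 < κ₃) (M : ℕ)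
    (u₁ u₂ : ℝ → ℝ)
    (hu₁ : ∀ z₂, u₁ z₂ = (κ₁ * z₂ + κ₂) / (κ₁ * z₂ + κ₂ + κ₃))
    (hu₂ : ∀ z₂, u₂ z₂ = κ₃ / (κ₁ * z₂ + κ₂ + κ₃))
    (h₁ : ℝ → ℝ → ℝ × ℝ) (hh₁ : ∀ z₁ z₂, h₁ z₁ z₂ = (z₁ * u₁ z₂, z₁ * u₂ z₂)) :
    (∀ z₂ : ℝ, 0 ≤ z₂ → u₁ z₂ + u₂ z₂ = 1) ∧
    ∀ z₁ z₂ : ℝ, 0 ≤ z₂ →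
      (κ₁ * z₁ * z₂) • (h₁ (z₁ - 1) z₂ - h₁ z₁ z₂)
        + ((κ₂ + κ₃) * ((M : ℝ) - z₁)) • (h₁ (z₁ + 1) z₂ - h₁ z₁ z₂)
      = (κ₂ * ((M : ℝ) - z₁) - κ₁ * z₁ * z₂
            + (M : ℝ) * κ₁ * κ₃ * z₂ / (κ₂ + κ₃ + κ₁ * z₂),
         κ₃ * ((M : ℝ) - z₁) - (M : ℝ) * κ₁ * κ₃ * z₂ / (κ₂ + κ₃ + κ₁ * z₂)) := by
  have key : ∀ z₂ : ℝ, 0 ≤ z₂ → κ₁ * z₂ + κ₂ + κ₃ ≠ 0 := fun z₂ hz₂ => by positivity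
  constructor
  · intro z₂ hz₂
    rw [hu₁, hu₂]
    field_simp
  · intro z₁ z₂ hz₂
    have hd := key z₂ hz₂
    have hd' : κ₂ + κ₃ + κ₁ * z₂ ≠ 0 := by positivity
    simp only [hh₁, hu₁, hu₂, Prod.smul_mk, Prod.mk_sub_mk, Prod.mk_add_mk, smul_eq_mul,
      Prod.mk.injEq]
    constructor <;> field_simp <;> ring
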